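/- arXiv:1103.0336 — 3 statements merged into one kernel-verified Lean document; each statement's English description precedes it below -/
import Mathlib

section
/- Let G be a connected compact abelian group (written multiplicatively) with dual group Γ. If a character c ∈ Γ satisfies ⟨c, g⟩ = e^{f(g)} for all g ∈ G, where f : G → ℂ is continuous, then c = 0 (the trivial character). -/
open Real

/-- A continuous function into `2πℤ` on a preconnected space is constant. -/
lemma aux_const_2pi {X : Type*} [TopologicalSpace X] [PreconnectedSpace X]
    (g : X → ℝ) (hg : Continuous g) (h : ∀ x, ∃ n : ℤ, g x = n * (2 * Real.pi))
    (x y : X) : g x = g y := by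
  have key : ∀ a b : X, g a < g b → False := by
    intro a b hab
    obtain ⟨m, hm⟩ := h a
    obtain ⟨n, hn⟩ := h b
    have hmn : m < n := by
      by_contra hle
      push_neg at hle
      have : (n : ℝ) * (2 * Real.pi) ≤ (m : ℝ) * (2 * Real.pi) := by
        have : (n : ℝ) ≤ m := by exact_mod_cast hle
        nlinarith [Real.pi_pos]
      rw [hm, hn] at hab; linarith
    have hstep : g a + Real.pi ≤ g b := by
      have : (m : ℝ) + 1 ≤ n := by exact_mod_cast hmn
      rw [hm, hn]
      nlinarith [Real.pi_pos]
    have hS : IsPreconnected (Set.range g) := isPreconnected_range hg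
    have hOrd := hS.ordConnected
    have hmem : g a + Real.pi ∈ Set.range g := by
      apply hOrd.out ⟨a, rfl⟩ ⟨b, rfl⟩
      constructor
      · linarith [Real.pi_pos]
      · exact hstep
    obtain ⟨z, hz⟩ := hmem
    obtain ⟨k, hk⟩ := h z
    rw [hk, hm] at hz
    have hπ : ((2 * k : ℤ) : ℝ) * Real.pi = ((2 * m + 1 : ℤ) : ℝ) * Real.pi := by
      push_cast; linarith
    have := mul_right_cancel₀ Real.pi_ne_zero hπ
    have : (2 * k : ℤ) = 2 * m + 1 := by exact_mod_cast this
    omega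

  rcases lt_trichotomy (g x) (g y) with hlt | heq | hgt
  · exact absurd hlt (fun h => key x y h)
  · exact heq
  · exact absurd hgt (fun h => key y x h)

/-- On a connected compact abelian group `G`, a character `c` (a continuous
homomorphism into the unit circle of `ℂ`) which is an exponential, i.e. `c g = exp (f g)`
for a continuous `f : G → ℂ`, must be the trivial character. -/
theorem nontrivial_character_not_exponential
    {G : Type*} [TopologicalSpace G] [CompactSpace G] [ConnectedSpace G]
    [CommGroup G] [IsTopologicalGroup G]
    (c : G → ℂ) (hc_cont : Continuous c)
    (hc_hom : ∀ g h : G, c (g * h) = c g * c h)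
    (hc_mod : ∀ g : G, ‖c g‖ = 1)
    (f : G → ℂ) (hf : Continuous f)
    (hexp : ∀ g : G, c g = Complex.exp (f g)) :
    ∀ g : G, c g = 1 := by
  -- real part of f vanishes
  have hre : ∀ g : G, (f g).re = 0 := by
    intro g
    have h1 : Real.exp (f g).re = 1 := by
      rw [← Complex.norm_exp, ← hexp, hc_mod]
    rwa [Real.exp_eq_one_iff] at h1
  set φ : G → ℝ := fun g => (f g).im with hφdef
  have hφcont : Continuous φ := Complex.continuous_im.comp hf
  -- cocycle identity in 2πℤ
  have hcoc : ∀ g h : G, ∃ n : ℤ, φ (g * h) - φ g - φ h = n * (2 * Real.pi) := by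
    intro g h
    have he : Complex.exp (f (g * h)) = Complex.exp (f g + f h) := by
      rw [Complex.exp_add, ← hexp, ← hexp, ← hexp, hc_hom]
    obtain ⟨n, hn⟩ := Complex.exp_eq_exp_iff_exists_int.mp he
    refine ⟨n, ?_⟩
    have := congrArg Complex.im hn
    simp [Complex.add_im, Complex.mul_im, Complex.mul_re] at this
    simp only [hφdef]
    rw [this]; push_cast; ring
  -- the cocycle is constant by connectedness
  set Φ : G × G → ℝ := fun p => φ (p.1 * p.2) - φ p.1 - φ p.2 with hΦdef
  have hΦcont : Continuous Φ := by
    apply Continuous.sub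
    apply Continuous.sub
    · exact hφcont.comp (continuous_fst.mul continuous_snd)
    · exact hφcont.comp continuous_fst
    · exact hφcont.comp continuous_snd
  have hΦconst : ∀ p : G × G, Φ p = Φ (1, 1) :=
    fun p => aux_const_2pi Φ hΦcont (fun p => hcoc p.1 p.2) p (1, 1)
  have hadd : ∀ g h : G, φ (g * h) = φ g + φ h - φ 1 := by
    intro g h
    have := hΦconst (g, h)
    simp only [hΦdef] at this
    simp only [mul_one] at this
    linarith
  -- φ' := φ - φ 1 is a homomorphism into ℝ, bounded, hence zero
  set φ' : G → ℝ := fun g => φ g - φ 1 with hφ'def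
  have hφ'add : ∀ g h : G, φ' (g * h) = φ' g + φ' h := by
    intro g h
    simp only [hφ'def, hadd g h]; ring
  have hφ'pow : ∀ (g : G) (n : ℕ), φ' (g ^ n) = n * φ' g := by
    intro g n
    induction n with
    | zero =>
        simp only [pow_zero, hφ'def]
        have := hφ'add 1 1
        simp only [hφ'def, mul_one] at this
        push_cast
        linarith
    | succ n ih =>
        rw [pow_succ, hφ'add, ih]
        push_cast; ring
  have hφ'cont : Continuous φ' := hφcont.sub continuous_const
  have hφ'zero : ∀ g : G, φ' g = 0 := by
    intro g
    by_contra hne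
    have hpos : 0 < |φ' g| := abs_pos.mpr hne
    obtain ⟨M, hM⟩ : ∃ M : ℝ, ∀ x : G, |φ' x| ≤ M := by
      obtain ⟨x₀, -, hx₀⟩ := isCompact_univ.exists_isMaxOn Set.univ_nonempty
        (hφ'cont.abs.continuousOn)
      exact ⟨|φ' x₀|, fun x => hx₀ (Set.mem_univ x)⟩
    obtain ⟨n, hn⟩ := exists_nat_gt (M / |φ' g|)
    have h1 : M < n * |φ' g| := by
      rwa [div_lt_iff₀ hpos] at hn
    have h2 : |φ' (g ^ n)| = n * |φ' g| := by
      rw [hφ'pow, abs_mul, abs_of_nonneg (by positivity : (0:ℝ) ≤ (n:ℝ))]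
    have := hM (g ^ n)
    rw [h2] at this
    linarith
  -- conclude
  intro g
  have hφconst : φ g = φ 1 := by
    have := hφ'zero g; simp only [hφ'def] at this; linarith
  have hf1 : f g = f 1 := by
    apply Complex.ext
    · rw [hre, hre]
    · exact hφconst
  have hc1 : c 1 = 1 := by
    have h11 := hc_hom 1 1
    rw [mul_one] at h11
    have hne : c 1 ≠ 0 := by
      intro h0
      have := hc_mod 1
      rw [h0] at this; simp at this
    have : c 1 * 1 = c 1 * c 1 := by rw [mul_one]; exact h11
    exact (mul_left_cancel₀ hne this).symm
  rw [hexp, hf1, ← hexp]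
  exact hc1
end

section
/- Let G be a connected compact abelian group and f : G → ℂ a continuous function such that f(gh) - f(g) - f(h) ∈ 2πi ℤ for all g, h ∈ G. Then f is constant, and its constant value lies in 2πi ℤ + f(1) with f(g) = f(1) for all g; in particular e^{f} is the constant function e^{f(1)}. -/
open Complex

/-- If `f : G → ℂ` is continuous on a connected compact abelian group `G` and
`f (g*h) - f g - f h ∈ 2πiℤ` for all `g, h`, then `f` is constant (equal to `f 1`);
in particular `exp ∘ f` is the constant `exp (f 1)`. -/
theorem continuous_additive_up_to_2pii_is_constant
    {G : Type*} [TopologicalSpace G] [CompactSpace G] [ConnectedSpace G]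
    [CommGroup G] [IsTopologicalGroup G]
    (f : G → ℂ) (hf : Continuous f)
    (hadd : ∀ g h : G, ∃ k : ℤ, f (g * h) - f g - f h = 2 * Real.pi * I * (k : ℂ)) :
    (∀ g : G, f g = f 1) ∧ (∀ g : G, Complex.exp (f g) = Complex.exp (f 1)) := by
  have hπ : (0:ℝ) < 2 * Real.pi := by positivity
  -- the real-valued "integer" function
  set r : G × G → ℝ := fun p => (f (p.1 * p.2) - f p.1 - f p.2).im / (2 * Real.pi) with hr
  have hrcont : Continuous r := by
    apply Continuous.div_const
    exact Complex.continuous_im.comp (((hf.comp continuous_mul).sub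
      (hf.comp continuous_fst)).sub (hf.comp continuous_snd))
  have hrval : ∀ (g h : G) (k : ℤ), f (g * h) - f g - f h = 2 * Real.pi * I * (k : ℂ) →
      r (g, h) = (k : ℝ) := by
    intro g h k hk
    simp only [hr, hk]
    rw [show (2 * Real.pi * I * (k:ℂ)) = ((2 * Real.pi * k : ℝ) : ℂ) * I by push_cast; ring]
    rw [Complex.mul_I_im, Complex.ofReal_re]
    field_simp
  have hrint : ∀ p : G × G, ∃ k : ℤ, r p = (k : ℝ) := by
    rintro ⟨g, h⟩
    obtain ⟨k, hk⟩ := hadd g h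
    exact ⟨k, hrval g h k hk⟩
  -- r is constant by IVT
  have hrconst : ∀ p q : G × G, r p = r q := by
    intro p q
    obtain ⟨kp, hkp⟩ := hrint p
    obtain ⟨kq, hkq⟩ := hrint q
    by_contra hne
    have hkne : kp ≠ kq := by
      intro h; apply hne; rw [hkp, hkq, h]
    set t : ℝ := ((min kp kq : ℤ) : ℝ) + 1/2 with ht
    have htmem : t ∈ Set.range r := by
      rcases lt_or_gt_of_ne hkne with hlt | hlt
      · have hmin : ((min kp kq : ℤ) : ℝ) = (kp : ℝ) := by
          rw [min_eq_left hlt.le]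
        apply intermediate_value_univ p q hrcont
        have : (kp : ℝ) + 1 ≤ (kq : ℝ) := by exact_mod_cast hlt
        constructor
        · rw [hkp, ht, hmin]; linarith
        · rw [hkq, ht, hmin]; linarith
      · have hmin : ((min kp kq : ℤ) : ℝ) = (kq : ℝ) := by
          rw [min_eq_right hlt.le]
        apply intermediate_value_univ q p hrcont
        have : (kq : ℝ) + 1 ≤ (kp : ℝ) := by exact_mod_cast hlt
        constructor
        · rw [hkq, ht, hmin]; linarith
        · rw [hkp, ht, hmin]; linarith
    obtain ⟨s, hs⟩ := htmem
    obtain ⟨ks, hks⟩ := hrint s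
    rw [hks, ht] at hs
    obtain ⟨m, hm⟩ : ∃ m : ℤ, m = min kp kq := ⟨_, rfl⟩
    rw [← hm] at hs
    have h2 : ((2 * (ks - m) : ℤ) : ℝ) = ((1 : ℤ) : ℝ) := by push_cast; linarith
    have h3 := Int.cast_injective h2
    omega
  -- hence the defect is constant, equal to its value at (1,1), namely -f 1
  have hdef : ∀ g h : G, f (g * h) - f g - f h = -(f 1) := by
    intro g h
    obtain ⟨k, hk⟩ := hadd g h
    obtain ⟨k0, hk0⟩ := hadd 1 1
    have h11 : f (1 * 1) - f 1 - f 1 = -(f 1) := by simp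
    have hr1 : r (g, h) = r (1, 1) := hrconst _ _
    rw [hrval g h k hk, hrval 1 1 k0 hk0] at hr1
    have hkk : k = k0 := by exact_mod_cast hr1
    rw [hk, hkk, ← hk0, h11]
  -- F is an additive homomorphism
  set F : G → ℂ := fun g => f g - f 1 with hF
  have hFadd : ∀ g h : G, F (g * h) = F g + F h := by
    intro g h
    have := hdef g h
    simp only [hF]
    linear_combination this
  have hF1 : F 1 = 0 := by simp [hF]
  have hFpow : ∀ (g : G) (n : ℕ), F (g ^ n) = (n : ℂ) * F g := by
    intro g n
    induction n with
    | zero => simpa using hF1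
    | succ n ih =>
      rw [pow_succ, hFadd, ih]
      push_cast; ring
  have hFcont : Continuous F := hf.sub continuous_const
  -- boundedness
  obtain ⟨x, -, hx⟩ := isCompact_univ.exists_isMaxOn (Set.univ_nonempty)
    ((continuous_norm.comp hFcont).continuousOn)
  have hF0 : ∀ g : G, F g = 0 := by
    intro g
    by_contra hg
    have hpos : 0 < ‖F g‖ := norm_pos_iff.mpr hg
    obtain ⟨n, hn⟩ := exists_nat_gt (‖F x‖ / ‖F g‖)
    have h1 : ‖F (g ^ n)‖ ≤ ‖F x‖ := hx (Set.mem_univ (g ^ n))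
    rw [hFpow, norm_mul, Complex.norm_natCast] at h1
    have : ‖F x‖ / ‖F g‖ < n := hn
    have h2 : ‖F x‖ < n * ‖F g‖ := by
      rwa [div_lt_iff₀ hpos] at this
    linarith
  have hfc : ∀ g : G, f g = f 1 := by
    intro g
    have := hF0 g
    simp only [hF] at this
    exact sub_eq_zero.mp this
  exact ⟨hfc, fun g => by rw [hfc g]⟩
end

section
/- Let a be an n×n matrix function on the circle whose entries are trigonometric polynomials, a(t) = Σ_{j=j₀}^{j₁} a_j e^{ijt} with matrix coefficients a_j ∈ ℂ^{n×n}. Then there exists an integer j₂ ≥ j₁ such that for every ε > 0 one can choose coefficients a'_k ∈ ℂ^{n×n}, k = j₀,…,j₂, with ‖a'_k − a_k‖ < ε for all k (setting a_{j₁+1} = ⋯ = a_{j₂} = 0) and such that the matrix function a'(t) = Σ_{j=j₀}^{j₂} a'_j e^{ijt} satisfies det a'(t) ≠ 0 for all t ∈ [0, 2π). -/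
open Complex Polynomial

/-- a matrix trigonometric polynomial `a(t) = Σ_{j=j₀}^{j₁} a_j e^{ijt}` can be
perturbed, after possibly adding finitely many higher-order terms (up to some `j₂ ≥ j₁`
depending only on `a`), by an arbitrarily small change of coefficients so that the perturbed
polynomial has everywhere nonzero determinant on the circle. -/
theorem trig_matrix_polynomial_small_perturbation_invertible
    (n : ℕ) (j₀ j₁ : ℤ) (hj : j₀ ≤ j₁)
    (a : ℤ → Matrix (Fin n) (Fin n) ℂ)
    (hsupp : ∀ j : ℤ, j < j₀ ∨ j₁ < j → a j = 0) :
    ∃ j₂ : ℤ, j₁ ≤ j₂ ∧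
      ∀ ε : ℝ, 0 < ε →
        ∃ a' : ℤ → Matrix (Fin n) (Fin n) ℂ,
          (∀ j : ℤ, j < j₀ ∨ j₂ < j → a' j = 0) ∧
          (∀ (j : ℤ) (p q : Fin n), ‖a' j p q - a j p q‖ < ε) ∧
          (∀ t : ℝ,
            (∑ j ∈ Finset.Icc j₀ j₂, Complex.exp (I * (j : ℂ) * (t : ℂ)) • a' j).det ≠ 0) := by
  set d : ℕ := (j₁ - j₀).toNat with hdd
  have hd : (d : ℤ) = j₁ - j₀ := Int.toNat_of_nonneg (by omega)
  refine ⟨j₁ + 1, by omega, fun ε hε => ?_⟩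
  set c : ℝ := ε / 2 with hc
  have hc0 : 0 < c := by positivity
  -- the perturbed matrix polynomial
  set M : Matrix (Fin n) (Fin n) ℂ[X] := Matrix.of fun p q =>
    (∑ k ∈ Finset.range (d + 1), C (a (j₀ + k) p q) * X ^ k)
      + if p = q then C (c : ℂ) * X ^ (d + 1) else 0 with hM
  have hdeg_sum : ∀ p q : Fin n,
      (∑ k ∈ Finset.range (d + 1), C (a (j₀ + k) p q) * X ^ k).natDegree ≤ d := by
    intro p q
    refine Polynomial.natDegree_sum_le_of_forall_le _ _ fun k hk => ?_
    refine (Polynomial.natDegree_C_mul_le _ _).trans ?_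
    simp only [natDegree_X_pow]
    exact Nat.lt_succ_iff.mp (Finset.mem_range.mp hk)
  have hdegM : ∀ p q : Fin n, (M p q).natDegree ≤ d + 1 := by
    intro p q
    simp only [hM, Matrix.of_apply]
    refine (Polynomial.natDegree_add_le _ _).trans ?_
    rcases eq_or_ne p q with h | h
    · simp only [if_pos h]
      refine max_le ((hdeg_sum p q).trans (Nat.le_succ d)) ?_
      refine (Polynomial.natDegree_C_mul_le _ _).trans ?_
      simp
    · simp only [if_neg h, natDegree_zero]
      exact max_le ((hdeg_sum p q).trans (Nat.le_succ d)) (by omega)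
  have hdegM' : ∀ p q : Fin n, p ≠ q → (M p q).natDegree ≤ d := by
    intro p q h
    simp only [hM, Matrix.of_apply, if_neg h, add_zero]
    exact hdeg_sum p q
  have hcoeffM : ∀ p : Fin n, (M p p).coeff (d + 1) = (c : ℂ) := by
    intro p
    simp only [hM, Matrix.of_apply, if_pos rfl, Polynomial.coeff_add,
      Polynomial.finset_sum_coeff, Polynomial.coeff_C_mul, Polynomial.coeff_X_pow]
    rw [Finset.sum_eq_zero, zero_add]
    · simp
    · intro k hk
      have : ¬ (d + 1 = k) := by
        have := Finset.mem_range.mp hk; omega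
      simp [this]
  set g : ℂ[X] := M.det with hg
  have hgc : g.coeff (n * (d + 1)) = (c : ℂ) ^ n := by
    rw [hg, Matrix.det_apply, Polynomial.finset_sum_coeff]
    rw [Finset.sum_eq_single (1 : Equiv.Perm (Fin n))]
    · simp only [Equiv.Perm.sign_one, one_smul, Equiv.Perm.one_apply]
      have := Polynomial.coeff_prod_of_natDegree_le (s := (Finset.univ : Finset (Fin n)))
        (fun i => M i i) (d + 1) (fun p _ => hdegM p p)
      simp only [Finset.card_univ, Fintype.card_fin] at this
      rw [this]
      rw [Finset.prod_congr rfl fun p _ => hcoeffM p, Finset.prod_const,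
        Finset.card_univ, Fintype.card_fin]
    · intro σ _ hσ
      rw [Polynomial.coeff_smul]
      have hlt : (∏ i, M (σ i) i).natDegree < n * (d + 1) := by
        calc (∏ i, M (σ i) i).natDegree ≤ ∑ i, (M (σ i) i).natDegree :=
              Polynomial.natDegree_prod_le _ _
          _ < ∑ _i : Fin n, (d + 1) := by
              obtain ⟨i, hi⟩ : ∃ i, σ i ≠ i := by
                by_contra h
                push_neg at h
                exact hσ (Equiv.ext h)
              exact Finset.sum_lt_sum (fun i _ => hdegM _ _)
                ⟨i, Finset.mem_univ i, lt_of_le_of_lt (hdegM' _ _ hi) (Nat.lt_succ_self d)⟩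
          _ = n * (d + 1) := by simp [Finset.sum_const, mul_comm]
      rw [Polynomial.coeff_eq_zero_of_natDegree_lt hlt, smul_zero]
    · simp
  have hg0 : g ≠ 0 := by
    intro h
    rw [h, Polynomial.coeff_zero] at hgc
    exact (pow_ne_zero n (by exact_mod_cast hc0.ne')) hgc.symm
  -- the finite set of forbidden radii
  set T : Finset ℝ := g.roots.toFinset.image norm with hT
  -- eventually (as r → 1) conditions
  have hev : ∀ᶠ r : ℝ in nhds 1,
      (∀ k ∈ Finset.range (d + 1), ∀ p q : Fin n,
        ‖(((r : ℂ)) ^ k - 1) * a (j₀ + k) p q‖ < ε) ∧ c * r ^ (d + 1) < ε := by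
    refine Filter.Eventually.and ?_ ?_
    · rw [Filter.eventually_all_finset]
      intro k _
      rw [Filter.eventually_all]
      intro p
      rw [Filter.eventually_all]
      intro q
      have hz : Filter.Tendsto (fun r : ℝ => (((r : ℂ)) ^ k - 1) * a (j₀ + k) p q)
          (nhds 1) (nhds 0) :=
        ((((Complex.continuous_ofReal.pow k).sub continuous_const).mul
          continuous_const).tendsto' 1 0 (by simp))
      exact (((continuous_norm.tendsto' 0 0 norm_zero).comp
        hz).eventually_lt_const hε)
    · have : Filter.Tendsto (fun r : ℝ => c * r ^ (d + 1)) (nhds 1) (nhds c) :=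
        (continuous_const.mul (continuous_pow (d + 1))).tendsto' 1 c (by simp [hc])
      exact this.eventually_lt_const (by rw [hc]; linarith)
  rw [Metric.eventually_nhds_iff] at hev
  obtain ⟨δ, hδ, hδ'⟩ := hev
  obtain ⟨r, hrmem, hrT⟩ := (Set.Ioo_infinite (by linarith : (1:ℝ) < 1 + δ)).exists_notMem_finset T
  obtain ⟨hr1, hr2⟩ := hrmem
  have hrQ := hδ' (y := r) (by rw [Real.dist_eq, abs_of_pos (by linarith)]; linarith)
  have hr0 : (0:ℝ) < r := by linarith
  -- the perturbed coefficients
  set a' : ℤ → Matrix (Fin n) (Fin n) ℂ := fun j =>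
    if j ∈ Finset.Icc j₀ j₁ then ((r : ℂ) ^ (j - j₀).toNat) • a j
    else if j = j₁ + 1 then (((c * r ^ (d + 1) : ℝ)) : ℂ) • (1 : Matrix (Fin n) (Fin n) ℂ)
    else 0 with ha'
  refine ⟨a', ?_, ?_, ?_⟩
  · intro j hjj
    have h1 : j ∉ Finset.Icc j₀ j₁ := by
      rw [Finset.mem_Icc]; omega
    have h2 : j ≠ j₁ + 1 := by omega
    simp only [ha']
    rw [if_neg h1, if_neg h2]
  · intro j p q
    by_cases h1 : j ∈ Finset.Icc j₀ j₁
    · obtain ⟨hja, hjb⟩ := Finset.mem_Icc.mp h1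
      set k : ℕ := (j - j₀).toNat with hk
      have hkd : k ∈ Finset.range (d + 1) := by
        rw [Finset.mem_range]; omega
      have hjk : j = j₀ + k := by omega
      have := hrQ.1 k hkd p q
      rw [← hjk] at this
      simp only [ha', if_pos h1, Matrix.smul_apply, smul_eq_mul]
      calc ‖(r:ℂ) ^ k * a j p q - a j p q‖
          = ‖((r:ℂ) ^ k - 1) * a j p q‖ := by ring_nf
        _ < ε := this
    · by_cases h2 : j = j₁ + 1
      · have haj : a j = 0 := hsupp j (by omega)
        simp only [ha', if_neg h1, if_pos h2, haj, Matrix.zero_apply, sub_zero,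
          Matrix.smul_apply, Matrix.one_apply, smul_eq_mul]
        rcases eq_or_ne p q with h | h
        · simp only [if_pos h, mul_one]
          rw [Complex.norm_real, Real.norm_eq_abs, abs_of_pos (by positivity)]
          exact hrQ.2
        · simp [if_neg h, hε]
      · have haj : a j = 0 := by
          rcases h1 with _
          rw [Finset.mem_Icc] at h1
          push_neg at h1
          by_cases h3 : j < j₀
          · exact hsupp j (Or.inl h3)
          · exact hsupp j (Or.inr (by omega))
        simp [ha', h1, h2, haj, hε]
  · intro t
    set w : ℂ := (r : ℂ) * Complex.exp (I * t) with hw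
    have hexp : ∀ k : ℕ, Complex.exp (I * ((j₀ + k : ℤ) : ℂ) * t)
        = Complex.exp (I * (j₀ : ℂ) * t) * Complex.exp (I * t) ^ k := by
      intro k
      rw [← Complex.exp_nat_mul, ← Complex.exp_add]
      congr 1
      push_cast
      ring
    -- reindex the sum
    have hinj : Function.Injective (fun k : ℕ => j₀ + (k:ℤ)) := fun x y h => by simpa using h
    have hIcc : Finset.Icc j₀ (j₁ + 1)
        = Finset.map ⟨fun k : ℕ => j₀ + k, hinj⟩ (Finset.range (d + 2)) := by
      ext j
      simp only [Finset.mem_Icc, Finset.mem_map, Finset.mem_range, Function.Embedding.coeFn_mk]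
      constructor
      · rintro ⟨h1, h2⟩
        exact ⟨(j - j₀).toNat, by omega, by omega⟩
      · rintro ⟨k, hk, rfl⟩
        omega
    have hsum : (∑ j ∈ Finset.Icc j₀ (j₁ + 1), Complex.exp (I * (j : ℂ) * t) • a' j)
        = Complex.exp (I * (j₀ : ℂ) * t) • (M.map (Polynomial.eval w)) := by
      rw [hIcc, Finset.sum_map]
      simp only [Function.Embedding.coeFn_mk]
      ext p q
      simp only [Matrix.sum_apply, Matrix.smul_apply, Matrix.map_apply, smul_eq_mul]
      rw [Finset.sum_range_succ]
      have hlast : j₀ + ((d + 1 : ℕ) : ℤ) = j₁ + 1 := by omega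
      have hmem : ∀ k : ℕ, k < d + 1 → (j₀ + (k:ℤ)) ∈ Finset.Icc j₀ j₁ := by
        intro k hk
        rw [Finset.mem_Icc]; omega
      have hnotmem : (j₀ + ((d+1:ℕ):ℤ)) ∉ Finset.Icc j₀ j₁ := by
        rw [Finset.mem_Icc]; omega
      have hMev : Polynomial.eval w (M p q)
          = (∑ k ∈ Finset.range (d + 1), a (j₀ + k) p q * w ^ k)
            + if p = q then (c:ℂ) * w ^ (d + 1) else 0 := by
        simp only [hM, Matrix.of_apply, Polynomial.eval_add, Polynomial.eval_finset_sum,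
          Polynomial.eval_mul, Polynomial.eval_C, Polynomial.eval_pow, Polynomial.eval_X]
        rcases eq_or_ne p q with h | h <;> simp [h]
      rw [hMev, mul_add, Finset.mul_sum]
      congr 1
      · refine Finset.sum_congr rfl fun k hk => ?_
        rw [Finset.mem_range] at hk
        have hms := hmem k hk
        have htn : ((j₀ + (k:ℤ)) - j₀).toNat = k := by omega
        simp only [ha', if_pos hms, Matrix.smul_apply, smul_eq_mul, htn, hexp k, hw]
        ring
      · have h2 : (j₀ + ((d+1:ℕ):ℤ)) = j₁ + 1 := hlast
        simp only [ha', if_neg hnotmem, if_pos h2, Matrix.smul_apply, Matrix.one_apply,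
          smul_eq_mul, hexp (d+1), hw]
        push_cast
        rcases eq_or_ne p q with h | h <;> simp [h] <;> ring
    rw [hsum, Matrix.det_smul]
    have hdet : (M.map (Polynomial.eval w)).det = Polynomial.eval w g := by
      rw [hg]
      have := RingHom.map_det (Polynomial.evalRingHom w) M
      simpa using this.symm
    rw [hdet]
    refine mul_ne_zero (pow_ne_zero _ (Complex.exp_ne_zero _)) ?_
    intro hzero
    apply hrT
    rw [hT, Finset.mem_image]
    refine ⟨w, Multiset.mem_toFinset.mpr ?_, ?_⟩
    · rw [Polynomial.mem_roots hg0]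
      exact hzero
    · rw [hw]
      simp only [norm_mul, Complex.norm_real, Real.norm_eq_abs, Complex.norm_exp]
      have : (I * (t:ℂ)).re = 0 := by simp
      rw [this, Real.exp_zero, mul_one, abs_of_pos hr0]
end
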